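/- arXiv:2011.05011 — 6 statements merged into one kernel-verified Lean document; each statement's English description precedes it below -/
import Mathlib

section
/- Let P be a group of nilpotency class 3 and let E_2(P) = {x ∈ P : [x,y,y] = 1 for all y ∈ P}. Then E_2(P) is a characteristic subgroup of P containing the second center Z_2(P). -/
open scoped commutatorElement

/-- For a group `P` of nilpotency class 3, the set
`E₂(P) = {x ∈ P | [x,y,y] = 1 for all y ∈ P}` is a characteristic subgroup of `P`
containing the second centre `Z₂(P)`. -/
theorem E2_is_characteristic_subgroup_containing_Z2
    (P : Type*) [Group P] [Group.IsNilpotent P]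
    (h : Group.nilpotencyClass P = 3) :
    ∃ H : Subgroup P,
      (H : Set P) = {x : P | ∀ y : P, ⁅⁅x, y⁆, y⁆ = 1} ∧
      H.Characteristic ∧
      upperCentralSeries P 2 ≤ H := by
  -- γ₄ = 1 : all quadruple commutators vanish
  have hbot : (⊤ : Subgroup P).lowerCentralSeries 3 = ⊥ := by
    have := lowerCentralSeries_nilpotencyClass (G := P)
    rwa [h] at this
  have h3 : ∀ a b c d : P, ⁅⁅⁅a, b⁆, c⁆, d⁆ = 1 := by
    intro a b c d
    have h1 : ⁅a, b⁆ ∈ (⊤ : Subgroup P).lowerCentralSeries 1 := by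
      rw [lowerCentralSeries_succ]
      exact Subgroup.commutator_mem_commutator (Subgroup.mem_top a) (Subgroup.mem_top b)
    have h2 : ⁅⁅a, b⁆, c⁆ ∈ (⊤ : Subgroup P).lowerCentralSeries 2 := by
      rw [lowerCentralSeries_succ]
      exact Subgroup.commutator_mem_commutator h1 (Subgroup.mem_top c)
    have h3' : ⁅⁅⁅a, b⁆, c⁆, d⁆ ∈ (⊤ : Subgroup P).lowerCentralSeries 3 := by
      rw [lowerCentralSeries_succ]
      exact Subgroup.commutator_mem_commutator h2 (Subgroup.mem_top d)
    rwa [hbot, Subgroup.mem_bot] at h3'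
  -- double commutators are central
  have cent : ∀ a b c g : P, Commute ⁅⁅a, b⁆, c⁆ g := fun a b c g =>
    commutatorElement_eq_one_iff_commute.mp (h3 a b c g)
  have conj_cent : ∀ (a b c g : P), g * ⁅⁅a, b⁆, c⁆ * g⁻¹ = ⁅⁅a, b⁆, c⁆ := by
    intro a b c g
    rw [← (cent a b c g).eq, mul_inv_cancel_right]
  -- the map d ↦ ⁅⁅b,y⁆, d⁆ is a homomorphism
  have hom : ∀ b y c d : P, ⁅⁅b, y⁆, c * d⁆ = ⁅⁅b, y⁆, c⁆ * ⁅⁅b, y⁆, d⁆ := by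
    intro b y c d
    have e1 : ⁅⁅b, y⁆, c * d⁆ = ⁅⁅b, y⁆, c⁆ * (c * ⁅⁅b, y⁆, d⁆ * c⁻¹) := by group
    rw [e1, conj_cent]
  have hinv : ∀ b y c : P, ⁅⁅b, y⁆, c⁻¹⁆ = ⁅⁅b, y⁆, c⁆⁻¹ := by
    intro b y c
    have e : ⁅⁅b, y⁆, c⁆ * ⁅⁅b, y⁆, c⁻¹⁆ = 1 := by
      rw [← hom, mul_inv_cancel, commutatorElement_one_right]
    rw [(cent b y c ⁅⁅b, y⁆, c⁻¹⁆).eq] at e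
    exact eq_inv_of_mul_eq_one_left e
  -- commutating with a conjugate of a commutator
  have hconj : ∀ b y a z : P, ⁅a * ⁅b, y⁆ * a⁻¹, z⁆ = ⁅⁅b, y⁆, z⁆ := by
    intro b y a z
    have e1 : ⁅a * ⁅b, y⁆ * a⁻¹, z⁆ = a * ⁅⁅b, y⁆, a⁻¹ * z * a⁆ * a⁻¹ := by group
    have e2 : ⁅⁅b, y⁆, a⁻¹ * z * a⁆ = ⁅⁅b, y⁆, z⁆ := by
      rw [show (a⁻¹ * z * a : P) = a⁻¹ * (z * a) from by group, hom, hom, hinv,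
        (cent b y z ⁅⁅b, y⁆, a⁆).eq, inv_mul_cancel_left]
    rw [e1, e2]
    exact conj_cent b y z a
  -- linearity in the first variable
  have lin1 : ∀ a b y z : P, ⁅⁅a * b, y⁆, z⁆ = ⁅⁅a, y⁆, z⁆ * ⁅⁅b, y⁆, z⁆ := by
    intro a b y z
    have e1 : ⁅⁅a * b, y⁆, z⁆ =
        ((a * ⁅b, y⁆ * a⁻¹) * ⁅⁅a, y⁆, z⁆ * (a * ⁅b, y⁆ * a⁻¹)⁻¹) *
          ⁅a * ⁅b, y⁆ * a⁻¹, z⁆ := by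
      rw [show ⁅a * b, y⁆ = (a * ⁅b, y⁆ * a⁻¹) * ⁅a, y⁆ from by group]
      group
    rw [e1, conj_cent, hconj]
  refine ⟨{ carrier := {x : P | ∀ y : P, ⁅⁅x, y⁆, y⁆ = 1}
            one_mem' := by intro y; simp
            mul_mem' := by
              intro a b ha hb y
              rw [lin1, ha y, hb y, one_mul]
            inv_mem' := by
              intro x hx y
              have e := lin1 x x⁻¹ y y
              rw [mul_inv_cancel, hx y, one_mul] at e
              simpa using e.symm }, rfl, ?_, ?_⟩
  · refine ⟨fun φ => ?_⟩
    ext x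
    simp only [Subgroup.mem_comap]
    constructor
    · intro hx y
      have h1 : φ ⁅⁅x, y⁆, y⁆ = 1 := by
        rw [map_commutatorElement, map_commutatorElement]
        exact hx (φ y)
      exact φ.injective (h1.trans (map_one φ).symm)
    · intro hx y
      show ⁅⁅φ x, y⁆, y⁆ = 1
      have h1 : φ ⁅⁅x, φ.symm y⁆, φ.symm y⁆ = 1 := by
        rw [hx (φ.symm y)]; exact map_one φ
      rw [map_commutatorElement, map_commutatorElement] at h1
      simpa using h1
  · intro x hx y
    have hx' := (mem_upperCentralSeries_succ_iff (n := 1)).mp hx y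
    rw [upperCentralSeries_one] at hx'
    have hc : Commute ⁅x, y⁆ y := by
      rw [commutatorElement_def]
      exact (Subgroup.mem_center_iff.mp hx' y).symm
    exact commutatorElement_eq_one_iff_commute.mpr hc
end

section
/- Let p be a prime, S a p-group, and E, K ≤ S subgroups such that EK is a subgroup of S. If N_K(E) ≤ E, then K ≤ E. -/
open scoped Pointwise

/-- Let `p` be a prime, `S` a finite `p`-group, and `E, K ≤ S` subgroups such that the
set product `EK` is a subgroup of `S`.  If `N_K(E) ≤ E`, then `K ≤ E`. -/
theorem le_of_normalizer_inter_le
    (p : ℕ) (hp : p.Prime) (S : Type*) [Group S] [Finite S] (hS : IsPGroup p S)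
    (E K : Subgroup S)
    (hEK : ∃ H : Subgroup S, (H : Set S) = (E : Set S) * (K : Set S))
    (hN : K ⊓ Subgroup.normalizer (E : Set S) ≤ E) :
    K ≤ E := by
  obtain ⟨H, hH⟩ := hEK
  have hE : E ≤ H := by
    intro e he
    have : e ∈ (H : Set S) := by
      rw [hH]; exact ⟨e, he, 1, K.one_mem, mul_one e⟩
    exact this
  have hK : K ≤ H := by
    intro k hk
    have : k ∈ (H : Set S) := by
      rw [hH]; exact ⟨1, E.one_mem, k, hk, one_mul k⟩
    exact this
  -- key: any element of H normalizing E lies in E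
  have key : ∀ h ∈ H, h ∈ Subgroup.normalizer (E : Set S) → h ∈ E := by
    intro h hh hn
    have : h ∈ (H : Set S) := hh
    rw [hH] at this
    obtain ⟨e, he, k, hk, hek⟩ := this
    have hkE : k ∈ E := by
      apply hN
      refine ⟨hk, ?_⟩
      have heN : e ∈ Subgroup.normalizer (E : Set S) := Subgroup.le_normalizer he
      have : k = e⁻¹ * h := by rw [← hek]; group
      rw [this]
      exact (Subgroup.normalizer (E : Set S)).mul_mem ((Subgroup.normalizer (E : Set S)).inv_mem heN) hn
    rw [← hek]
    exact E.mul_mem he hkE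
  -- now show H ≤ E using the normalizer condition in the p-group H
  suffices hHE : H ≤ E from le_trans hK hHE
  have hPH : IsPGroup p H := hS.to_subgroup H
  haveI : Fact (Nat.Prime p) := ⟨hp⟩
  haveI : Group.IsNilpotent H := hPH.isNilpotent
  have hNC : NormalizerCondition H := normalizerCondition_of_isNilpotent
  by_contra hcon
  have hlt : E.subgroupOf H < ⊤ := by
    rcases lt_or_eq_of_le (le_top : E.subgroupOf H ≤ ⊤) with h | h
    · exact h
    · exfalso; apply hcon
      intro x hx
      have : (⟨x, hx⟩ : H) ∈ E.subgroupOf H := h ▸ Subgroup.mem_top _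
      exact this
  obtain ⟨x, hxn, hxE⟩ := SetLike.exists_of_lt (hNC _ hlt)
  apply hxE
  have hxNE : (x : S) ∈ Subgroup.normalizer (E : Set S) := by
    rw [Subgroup.mem_normalizer_iff]
    intro g
    constructor
    · intro hg
      have hgH : g ∈ H := hE hg
      have := (Subgroup.mem_normalizer_iff.mp hxn (⟨g, hgH⟩ : H)).mp
        (show (⟨g, hgH⟩ : H) ∈ E.subgroupOf H from hg)
      exact this
    · intro hg
      have hgH : g ∈ H := by
        have h1 : x.1 * g * x.1⁻¹ ∈ H := hE hg
        have : g = x.1⁻¹ * (x.1 * g * x.1⁻¹) * x.1 := by group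
        rw [this]
        exact H.mul_mem (H.mul_mem (H.inv_mem x.2) h1) x.2
      exact (Subgroup.mem_normalizer_iff.mp hxn (⟨g, hgH⟩ : H)).mpr hg
  exact key x.1 x.2 hxNE
end

section
/- Let p be a prime, H a finite group, and M a strongly p-embedded subgroup of H. If K ≤ M is a subnormal subgroup of H, then K is a p'-group (its order is coprime to p). -/
/-- `M` is a strongly `p`-embedded subgroup of `H`: it is a proper subgroup of order
divisible by `p` such that `M ∩ M^h` has order coprime to `p` for all `h ∈ H \ M`. -/
def IsStronglyPEmbedded (p : ℕ) {H : Type*} [Group H] (M : Subgroup H) : Prop :=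
  M ≠ ⊤ ∧ p ∣ Nat.card M ∧
    ∀ h : H, h ∉ M →
      ¬ p ∣ Nat.card ↥(M ⊓ Subgroup.map (MulEquiv.toMonoidHom (MulAut.conj h)) M)

/-- `K` is a subnormal subgroup of `H`. -/
def IsSubnormalSubgroup {H : Type*} [Group H] (K : Subgroup H) : Prop :=
  ∃ (n : ℕ) (c : ℕ → Subgroup H), c 0 = K ∧ c n = ⊤ ∧
    ∀ i < n, c i ≤ c (i + 1) ∧ ((c i).subgroupOf (c (i + 1))).Normal

/-- If `M` is strongly `p`-embedded in a finite group `H` and `K ≤ M` is subnormal in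
`H`, then `K` is a `p'`-group. -/
theorem subnormal_subgroup_of_strongly_p_embedded_is_p'_group
    (p : ℕ) (hp : p.Prime) (H : Type*) [Group H] [Finite H]
    (M : Subgroup H) (hM : IsStronglyPEmbedded p M)
    (K : Subgroup H) (hKM : K ≤ M) (hK : IsSubnormalSubgroup K) :
    ¬ p ∣ Nat.card K := by
  intro hpK
  obtain ⟨hMne, hpM, hMint⟩ := hM
  obtain ⟨n, c, hc0, hcn, hstep⟩ := hK
  have key : ∀ i ≤ n, K ≤ c i ∧ c i ≤ M := by
    intro i hi
    induction i with
    | zero => exact ⟨hc0.ge, hc0.le.trans hKM⟩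
    | succ i ih =>
      have hi' : i < n := Nat.lt_of_succ_le hi
      obtain ⟨hKci, hciM⟩ := ih hi'.le
      obtain ⟨hle, hnorm⟩ := hstep i hi'
      refine ⟨hKci.trans hle, fun h hh => ?_⟩
      by_contra hhM
      refine hMint h hhM ?_
      have hsub : c i ≤ M ⊓ Subgroup.map (MulEquiv.toMonoidHom (MulAut.conj h)) M := by
        intro x hx
        refine ⟨hciM hx, ?_⟩
        have hconj : h⁻¹ * x * h ∈ c i := by
          have := hnorm.conj_mem ⟨x, hle hx⟩ (Subgroup.mem_subgroupOf.mpr hx)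
            ⟨h⁻¹, inv_mem hh⟩
          have := Subgroup.mem_subgroupOf.mp this
          simpa [mul_assoc] using this
        refine Subgroup.mem_map.mpr ⟨h⁻¹ * x * h, hciM hconj, ?_⟩
        simp [MulAut.conj_apply, mul_assoc]
      calc p ∣ Nat.card K := hpK
        _ ∣ Nat.card (c i) := Subgroup.card_dvd_of_le hKci
        _ ∣ _ := Subgroup.card_dvd_of_le hsub
  have : M = ⊤ := top_le_iff.mp (hcn ▸ (key n le_rfl).2)
  exact hMne this
end

section
/- Let p be a prime, H a finite group with a strongly p-embedded subgroup, and K a normal subgroup of H that commutes with some element of order p in H. Then H/K has a strongly p-embedded subgroup. -/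
section Helpers

variable {H : Type*} [Group H]

/-- Conjugate of a subgroup. -/
noncomputable abbrev cjSub (g : H) (M : Subgroup H) : Subgroup H :=
  Subgroup.map (MulEquiv.toMonoidHom (MulAut.conj g)) M

lemma mem_cjSub {g h : H} {M : Subgroup H} : h ∈ cjSub g M ↔ g⁻¹ * h * g ∈ M := by
  rw [cjSub, Subgroup.mem_map_equiv]
  simp [MulAut.conj_symm_apply]

lemma cjSub_cjSub (g h : H) (M : Subgroup H) : cjSub h (cjSub g M) = cjSub (h * g) M := by
  rw [cjSub, cjSub, cjSub, Subgroup.map_map]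
  congr 1
  ext a
  simp [MulAut.conj_apply, mul_assoc]

lemma card_cjSub (g : H) (M : Subgroup H) : Nat.card (cjSub g M) = Nat.card M :=
  (Nat.card_congr (Subgroup.equivMapOfInjective M _
    ((MulAut.conj g).injective)).toEquiv).symm

lemma cjSub_inf (g : H) (A B : Subgroup H) :
    cjSub g (A ⊓ B) = cjSub g A ⊓ cjSub g B :=
  Subgroup.map_inf A B _ ((MulAut.conj g).injective)

lemma isStronglyPEmbedded_cjSub {p : ℕ} {M : Subgroup H} (g : H)
    (hM : IsStronglyPEmbedded p M) : IsStronglyPEmbedded p (cjSub g M) := by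
  obtain ⟨htop, hcard, hint⟩ := hM
  refine ⟨?_, ?_, ?_⟩
  · intro h
    apply htop
    rw [Subgroup.eq_top_iff']
    intro a
    have : g * a * g⁻¹ ∈ cjSub g M := h ▸ Subgroup.mem_top _
    rw [mem_cjSub] at this
    group at this
    simpa using this
  · rwa [card_cjSub]
  · intro h hh
    have hh' : g⁻¹ * h * g ∉ M := fun hc => hh (mem_cjSub.mpr hc)
    have key : cjSub g M ⊓ cjSub h (cjSub g M)
        = cjSub g (M ⊓ cjSub (g⁻¹ * h * g) M) := by
      rw [cjSub_cjSub, cjSub_inf, cjSub_cjSub]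
      congr 2
      group
    intro hdvd
    apply hint (g⁻¹ * h * g) hh'
    rw [show (M ⊓ Subgroup.map (MulEquiv.toMonoidHom (MulAut.conj (g⁻¹ * h * g))) M)
        = M ⊓ cjSub (g⁻¹ * h * g) M from rfl]
    rw [← card_cjSub g (M ⊓ cjSub (g⁻¹ * h * g) M), ← key]
    exact hdvd

lemma map_mk'_cjSub (K : Subgroup H) [K.Normal] (h : H) (N : Subgroup H) :
    Subgroup.map (QuotientGroup.mk' K) (cjSub h N)
      = cjSub (QuotientGroup.mk h : H ⧸ K) (Subgroup.map (QuotientGroup.mk' K) N) := by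
  rw [cjSub, cjSub, Subgroup.map_map, Subgroup.map_map]
  congr 1

lemma map_mk'_inf (K : Subgroup H) [K.Normal] {A B : Subgroup H}
    (hA : K ≤ A) (hB : K ≤ B) :
    Subgroup.map (QuotientGroup.mk' K) (A ⊓ B)
      = Subgroup.map (QuotientGroup.mk' K) A ⊓ Subgroup.map (QuotientGroup.mk' K) B := by
  refine le_antisymm (le_inf (Subgroup.map_mono inf_le_left)
    (Subgroup.map_mono inf_le_right)) ?_
  rintro q ⟨⟨a, haA, rfl⟩, ⟨b, hbB, hba⟩⟩
  have hk : b⁻¹ * a ∈ K := by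
    have hba' : (QuotientGroup.mk b : H ⧸ K) = QuotientGroup.mk a := hba
    rwa [QuotientGroup.eq] at hba'
  have haB : a ∈ B := by
    have : b * (b⁻¹ * a) ∈ B := B.mul_mem hbB (hB hk)
    simpa [mul_assoc] using this
  exact ⟨a, ⟨haA, haB⟩, rfl⟩

end Helpers

/-- If a finite group `H` has a strongly `p`-embedded subgroup and `K` is a normal
subgroup of `H` commuting with some element of order `p`, then `H/K` has a strongly
`p`-embedded subgroup. -/
theorem quotient_has_strongly_p_embedded
    (p : ℕ) (hp : p.Prime) (H : Type*) [Group H] [Finite H]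
    (hSE : ∃ M : Subgroup H, IsStronglyPEmbedded p M)
    (K : Subgroup H) [K.Normal]
    (x : H) (hx : orderOf x = p) (hcomm : ∀ k ∈ K, Commute k x) :
    ∃ M' : Subgroup (H ⧸ K), IsStronglyPEmbedded p M' := by
  classical
  haveI : Fact p.Prime := ⟨hp⟩
  obtain ⟨M, hM⟩ := hSE
  obtain ⟨hMtop, hMcard, hMint⟩ := hM
  -- pick y ∈ M of order p (Cauchy)
  haveI : Fintype ↥M := Fintype.ofFinite _
  have hMcard' : p ∣ Fintype.card ↥M := by
    rwa [← Nat.card_eq_fintype_card]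
  obtain ⟨⟨y, hyM⟩, hy⟩ := exists_prime_orderOf_dvd_card p hMcard'
  rw [Subgroup.orderOf_mk] at hy
  -- fixed points of ⟨y⟩ on H ⧸ M
  have hPy : IsPGroup p (Subgroup.zpowers y) :=
    IsPGroup.of_card (by rw [Nat.card_zpowers, hy, pow_one])
  have hPx : IsPGroup p (Subgroup.zpowers x) :=
    IsPGroup.of_card (by rw [Nat.card_zpowers, hx, pow_one])
  -- key: g fixes coset hM iff g ∈ h M h⁻¹
  have smul_fix : ∀ (g h : H), (g • (QuotientGroup.mk h : H ⧸ M) = QuotientGroup.mk h)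
      ↔ g ∈ cjSub h M := by
    intro g h
    rw [show (g • (QuotientGroup.mk h : H ⧸ M)) = QuotientGroup.mk (g * h) from rfl,
      QuotientGroup.eq, mem_cjSub]
    constructor
    · intro hmem
      have := M.inv_mem hmem
      simpa [mul_assoc] using this
    · intro hmem
      have := M.inv_mem hmem
      simpa [mul_assoc] using this
  have hfixy : MulAction.fixedPoints (Subgroup.zpowers y) (H ⧸ M)
      = {(QuotientGroup.mk 1 : H ⧸ M)} := by
    ext q
    obtain ⟨h, rfl⟩ := QuotientGroup.mk_surjective q
    simp only [MulAction.mem_fixedPoints, Set.mem_singleton_iff]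
    constructor
    · intro hfix
      have hyfix : y ∈ cjSub h M :=
        (smul_fix y h).mp (hfix ⟨y, Subgroup.mem_zpowers y⟩)
      by_contra hne
      have hhM : h ∉ M := by
        intro hmem
        apply hne
        rw [QuotientGroup.eq]
        simpa using hmem
      have hdv : p ∣ Nat.card ↥(M ⊓ cjSub h M) := by
        have := Subgroup.orderOf_dvd_natCard (M ⊓ cjSub h M) ⟨hyM, hyfix⟩
        rwa [hy] at this
      exact hMint h hhM hdv
    · intro hq
      rintro ⟨s, hs⟩
      have hhM : h ∈ M := by
        rw [QuotientGroup.eq] at hq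
        simpa using hq
      have hsM : s ∈ M := (Subgroup.zpowers_le.mpr hyM) hs
      exact (smul_fix s h).mpr (mem_cjSub.mpr
        (M.mul_mem (M.mul_mem (M.inv_mem hhM) hsM) hhM))
  have hcount : Nat.card (H ⧸ M) ≡ 1 [MOD p] := by
    have hmod := hPy.card_modEq_card_fixedPoints (H ⧸ M)
    have h1 : Nat.card (↥({(QuotientGroup.mk 1 : H ⧸ M)} : Set (H ⧸ M))) = 1 :=
      Nat.card_unique
    rwa [hfixy, h1] at hmod
  -- x fixes some coset
  have hxfix : ∃ h : H, x ∈ cjSub h M := by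
    have hmod := hPx.card_modEq_card_fixedPoints (H ⧸ M)
    by_contra hno
    push_neg at hno
    have hempty : MulAction.fixedPoints (Subgroup.zpowers x) (H ⧸ M) = ∅ := by
      ext q
      obtain ⟨h, rfl⟩ := QuotientGroup.mk_surjective q
      simp only [MulAction.mem_fixedPoints, Set.mem_empty_iff_false, iff_false, not_forall]
      exact ⟨⟨x, Subgroup.mem_zpowers x⟩, fun hc => hno h ((smul_fix x h).mp hc)⟩
    rw [hempty] at hmod
    have h0 : Nat.card (↥(∅ : Set (H ⧸ M))) = 0 := by simp
    rw [h0] at hmod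
    have h1 : (1 : ℕ) ≡ 0 [MOD p] := hcount.symm.trans hmod
    have hpd : p ∣ 1 := Nat.modEq_zero_iff_dvd.mp h1
    have := Nat.le_of_dvd one_pos hpd
    have := hp.two_le
    omega
  obtain ⟨g, hxM₁⟩ := hxfix
  set M₁ := cjSub g M with hM₁def
  have hM₁ : IsStronglyPEmbedded p M₁ := isStronglyPEmbedded_cjSub g ⟨hMtop, hMcard, hMint⟩
  obtain ⟨hM₁top, hM₁card, hM₁int⟩ := hM₁
  clear hMint hMcard hMtop hfixy hcount
  -- K ≤ cjSub h M₁ for all h, once K ≤ M₁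
  -- first: K ≤ M₁
  have hKM₁ : K ≤ M₁ := by
    intro k hk
    by_contra hkM
    apply hM₁int k hkM
    have heq : k⁻¹ * x * k = x := by
      rw [(hcomm k hk).inv_left.eq, mul_assoc, inv_mul_cancel, mul_one]
    have hxcj : x ∈ cjSub k M₁ := mem_cjSub.mpr (by rw [heq]; exact hxM₁)
    have := Subgroup.orderOf_dvd_natCard (M₁ ⊓ cjSub k M₁) ⟨hxM₁, hxcj⟩
    rwa [hx] at this
  have hKcj : ∀ h : H, K ≤ cjSub h M₁ := by
    intro h k hk
    have : h⁻¹ * k * h ∈ K := by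
      simpa using ‹K.Normal›.conj_mem k hk h⁻¹
    exact mem_cjSub.mpr (hKM₁ this)
  -- p does not divide |K|
  have hKcard : ¬ p ∣ Nat.card K := by
    intro hdvd
    have hex : ∃ a : H, a ∉ M₁ := by
      by_contra hall
      push_neg at hall
      exact hM₁top ((Subgroup.eq_top_iff' M₁).mpr hall)
    obtain ⟨a, ha⟩ := hex
    apply hM₁int a ha
    have hle : K ≤ M₁ ⊓ cjSub a M₁ := le_inf hKM₁ (hKcj a)
    exact hdvd.trans (Subgroup.card_dvd_of_le hle)
  -- the image of M₁ in H ⧸ K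
  refine ⟨Subgroup.map (QuotientGroup.mk' K) M₁, ?_, ?_, ?_⟩
  · intro htop
    apply hM₁top
    have := congrArg (Subgroup.comap (QuotientGroup.mk' K)) htop
    rw [Subgroup.comap_map_eq, QuotientGroup.ker_mk', Subgroup.comap_top,
      sup_eq_left.mpr hKM₁] at this
    exact this
  · have hxq : (QuotientGroup.mk x : H ⧸ K) ∈ Subgroup.map (QuotientGroup.mk' K) M₁ :=
      ⟨x, hxM₁, rfl⟩
    have hord : orderOf (QuotientGroup.mk x : H ⧸ K) = p := by
      have hdvd : orderOf (QuotientGroup.mk x : H ⧸ K) ∣ p := by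
        rw [← hx]
        exact orderOf_map_dvd (QuotientGroup.mk' K) x
      rcases (Nat.Prime.eq_one_or_self_of_dvd hp _ hdvd) with h1 | hpp
      · exfalso
        rw [orderOf_eq_one_iff] at h1
        have hxK : x ∈ K := (QuotientGroup.eq_one_iff x).mp h1
        have := Subgroup.orderOf_dvd_natCard K hxK
        rw [hx] at this
        exact hKcard this
      · exact hpp
    have := Subgroup.orderOf_dvd_natCard _ hxq
    rwa [hord] at this
  · intro h' hh'
    obtain ⟨h, rfl⟩ := QuotientGroup.mk_surjective h'
    have hhM₁ : h ∉ M₁ := fun hc => hh' ⟨h, hc, rfl⟩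
    intro hdvd
    apply hM₁int h hhM₁
    have hkey : Subgroup.map (QuotientGroup.mk' K) M₁ ⊓
        Subgroup.map (MulEquiv.toMonoidHom (MulAut.conj (QuotientGroup.mk h : H ⧸ K)))
          (Subgroup.map (QuotientGroup.mk' K) M₁)
        = Subgroup.map (QuotientGroup.mk' K) (M₁ ⊓ cjSub h M₁) := by
      rw [map_mk'_inf K hKM₁ (hKcj h)]
      have hx2 := map_mk'_cjSub K h M₁
      rw [hx2]
    rw [hkey] at hdvd
    have hsurj := MonoidHom.subgroupMap_surjective (QuotientGroup.mk' K) (M₁ ⊓ cjSub h M₁)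
    have hcd : Nat.card (Subgroup.map (QuotientGroup.mk' K) (M₁ ⊓ cjSub h M₁))
        ∣ Nat.card (M₁ ⊓ cjSub h M₁ : Subgroup H) :=
      Subgroup.card_dvd_of_surjective _ hsurj
    exact hdvd.trans hcd
end

section
/- Let P be a regular p-group, T a subgroup of P containing the derived subgroup P', and suppose P = T·Ω_1(P). Then ℧^1(P) = ℧^1(T), i.e. the subgroup generated by p-th powers of elements of P equals the subgroup generated by p-th powers of elements of T. -/
/-- `P` is a regular `p`-group: for all `x, y ∈ P` there are elements
`g₁, …, g_t` of the derived subgroup of `⟨x, y⟩` with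
`(xy)^p = x^p y^p g₁^p ⋯ g_t^p`. -/
def IsRegularPGroup (p : ℕ) (P : Type*) [Group P] : Prop :=
  ∀ x y : P, ∃ l : List P,
    (∀ g ∈ l, g ∈ ⁅Subgroup.closure ({x, y} : Set P), Subgroup.closure ({x, y} : Set P)⁆) ∧
    (x * y) ^ p = x ^ p * y ^ p * (l.map (· ^ p)).prod

open Pointwise

/-- `℧¹(T)`: the subgroup generated by the `p`-th powers of the elements of `T`. -/
def agemo (p : ℕ) {P : Type*} [Group P] (T : Subgroup P) : Subgroup P :=
  Subgroup.closure {y : P | ∃ x ∈ T, y = x ^ p}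

/-- Let `P` be a regular `p`-group, `T` a subgroup of `P` containing the derived
subgroup `P'`, with `P = T·Ω₁(P)`.  Then `℧¹(P) = ℧¹(T)`. -/
theorem agemo_eq_of_regular
    (p : ℕ) (hp : p.Prime) (P : Type*) [Group P] [Finite P]
    (hP : IsPGroup p P) (hreg : IsRegularPGroup p P)
    (T : Subgroup P)
    (hT : ⁅(⊤ : Subgroup P), (⊤ : Subgroup P)⁆ ≤ T)
    (hgen : T ⊔ Subgroup.closure {x : P | x ^ p = 1} = ⊤) :
    agemo p (⊤ : Subgroup P) = agemo p T := by
  have hpow : ∀ x ∈ T, x ^ p ∈ agemo p T := fun x hx =>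
    Subgroup.subset_closure ⟨x, hx, rfl⟩
  have hcomm : ∀ a b : P, ∀ g,
      g ∈ ⁅Subgroup.closure ({a, b} : Set P), Subgroup.closure ({a, b} : Set P)⁆ → g ∈ T := by
    intro a b g hg
    exact hT (Subgroup.commutator_mono le_top le_top hg)
  have hprod : ∀ (l : List P), (∀ g ∈ l, g ∈ T) → (l.map (· ^ p)).prod ∈ agemo p T := by
    intro l hl
    refine Subgroup.list_prod_mem _ ?_
    intro x hx
    obtain ⟨g, hg, rfl⟩ := List.mem_map.1 hx
    exact hpow g (hl g hg)
  set Ω := Subgroup.closure {x : P | x ^ p = 1} with hΩ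
  have hΩnorm : Ω.Normal := by
    constructor
    intro n hn g
    induction hn using Subgroup.closure_induction with
    | mem x hx =>
      refine Subgroup.subset_closure ?_
      simp only [Set.mem_setOf_eq] at hx ⊢
      rw [conj_pow, hx, mul_one, mul_inv_cancel]
    | one => simpa using Subgroup.one_mem _
    | mul a b _ _ iha ihb =>
      have := Subgroup.mul_mem _ iha ihb
      simpa [mul_assoc] using this
    | inv a _ iha =>
      have := Subgroup.inv_mem _ iha
      simpa [mul_assoc] using this
  have key : ∀ s ∈ Ω, s ^ p ∈ agemo p T := by
    intro s hs
    induction hs using Subgroup.closure_induction with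
    | mem x hx => rw [Set.mem_setOf_eq] at hx; rw [hx]; exact Subgroup.one_mem _
    | one => simpa using Subgroup.one_mem (agemo p T)
    | mul a b ha hb iha ihb =>
      obtain ⟨l, hl, hlp⟩ := hreg a b
      rw [hlp]
      exact mul_mem (mul_mem iha ihb) (hprod l fun g hg => hcomm a b g (hl g hg))
    | inv a ha iha =>
      rw [inv_pow]
      exact inv_mem iha
  refine le_antisymm ?_ (Subgroup.closure_mono fun y ⟨x, hx, h⟩ => ⟨x, trivial, h⟩)
  refine (Subgroup.closure_le _).2 ?_
  rintro y ⟨x, -, rfl⟩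
  have hx : x ∈ (T : Set P) * (Ω : Set P) := by
    rw [← Subgroup.mul_normal]
    rw [hgen]
    trivial
  obtain ⟨t, ht, s, hs, rfl⟩ := hx
  obtain ⟨l, hl, hlp⟩ := hreg t s
  rw [SetLike.mem_coe, hlp]
  exact mul_mem (mul_mem (hpow t ht) (key s hs)) (hprod l fun g hg => hcomm t s g (hl g hg))
end

section
/- Let p be a prime, G a finite group, V a finite-dimensional GF(p)G-module, W = [V, O^p(G)], and T a Sylow p-subgroup of G. Then W + C_V(T) = W + C_V(G). In particular, if C_V(G) = 0 then C_V(T) ≤ W. -/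
/-- `O^p(G)`: the smallest normal subgroup of `G` with `p`-group quotient, realised as
the subgroup generated by all elements of order coprime to `p`. -/
def pResidual (p : ℕ) (G : Type*) [Group G] : Subgroup G :=
  Subgroup.closure {g : G | Nat.Coprime (orderOf g) p}

/-- The fixed points `C_V(H)` of a subgroup `H ≤ G` on a representation `V`. -/
def repFixedPoints (p : ℕ) {G : Type*} [Group G] {V : Type*} [AddCommGroup V]
    [Module (ZMod p) V] (ρ : Representation (ZMod p) G V) (H : Subgroup G) :
    Submodule (ZMod p) V where
  carrier := {v | ∀ g ∈ H, ρ g v = v}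
  add_mem' := by
    intro a b ha hb g hg
    rw [map_add, ha g hg, hb g hg]
  zero_mem' := fun g _ => map_zero (ρ g)
  smul_mem' := by
    intro c a ha g hg
    rw [map_smul, ha g hg]


lemma mem_repFixedPoints {p : ℕ} {G : Type*} [Group G] {V : Type*} [AddCommGroup V]
    [Module (ZMod p) V] {ρ : Representation (ZMod p) G V} {H : Subgroup G} {v : V} :
    v ∈ repFixedPoints p ρ H ↔ ∀ g ∈ H, ρ g v = v := Iff.rfl


lemma pResidual_normal (p : ℕ) (G : Type*) [Group G] : (pResidual p G).Normal := by
  constructor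
  intro n hn g
  have hmap : (pResidual p G).map (MulAut.conj g).toMonoidHom ≤ pResidual p G := by
    rw [pResidual, MonoidHom.map_closure]
    apply Subgroup.closure_mono
    rintro x ⟨y, hy, rfl⟩
    show Nat.Coprime (orderOf ((MulAut.conj g).toMonoidHom y)) p
    rwa [orderOf_injective _ (MulAut.conj g).injective]
  have : g * n * g⁻¹ = (MulAut.conj g).toMonoidHom n := by simp [MulAut.conj_apply]
  rw [this]
  exact hmap ⟨n, hn, rfl⟩

lemma isPGroup_quotient (p : ℕ) (hp : p.Prime) (G : Type*) [Group G] [Finite G] :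
    @IsPGroup p (G ⧸ pResidual p G) (by have := pResidual_normal p G; infer_instance) := by
  haveI := pResidual_normal p G
  intro q
  obtain ⟨g, rfl⟩ := QuotientGroup.mk_surjective q
  refine ⟨(orderOf g).factorization p, ?_⟩
  rw [← QuotientGroup.mk_pow, QuotientGroup.eq_one_iff]
  apply Subgroup.subset_closure
  show Nat.Coprime (orderOf (g ^ p ^ (orderOf g).factorization p)) p
  have hg : orderOf g ≠ 0 := (orderOf_pos g).ne'
  rw [orderOf_pow, Nat.gcd_eq_right (Nat.ordProj_dvd _ p)]
  exact (Nat.coprime_ordCompl hp hg).symm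

lemma pResidual_sup_sylow (p : ℕ) (hp : p.Prime) (G : Type*) [Group G] [Finite G]
    (T : Sylow p G) : pResidual p G ⊔ (T : Subgroup G) = ⊤ := by
  haveI := Fact.mk hp
  haveI := pResidual_normal p G
  set N := pResidual p G
  set K := N ⊔ (T : Subgroup G) with hK
  have hker : (QuotientGroup.mk' N).ker ≤ K := by
    rw [QuotientGroup.ker_mk']; exact le_sup_left
  have hsurj : Function.Surjective (QuotientGroup.mk' N) := QuotientGroup.mk'_surjective N
  have hdvd : (K.map (QuotientGroup.mk' N)).index ∣ (T : Subgroup G).index :=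
    (Subgroup.index_map_dvd _ hsurj).trans (Subgroup.index_dvd_of_le le_sup_right)
  obtain ⟨n, hn⟩ := (isPGroup_quotient p hp G).index (K.map (QuotientGroup.mk' N))
  have hnotdvd : ¬ p ∣ (T : Subgroup G).index := T.not_dvd_index
  have hn0 : n = 0 := by
    by_contra h
    exact hnotdvd (dvd_trans (dvd_pow_self p h) (hn ▸ hdvd))
  have hKtop : K.map (QuotientGroup.mk' N) = ⊤ := by
    rw [← Subgroup.index_eq_one, hn, hn0, pow_zero]
  have := Subgroup.comap_map_eq_self hker
  rw [hKtop] at this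
  rw [← this]
  simp

/-- Gaschütz-type consequence: for a `GF(p)G`-module `V` with `W = [V, O^p(G)]` and a
Sylow `p`-subgroup `T` of `G`, one has `W + C_V(T) = W + C_V(G)`; in particular, if
`C_V(G) = 0` then `C_V(T) ≤ W`. -/
theorem commutator_sup_fixed_points_eq
    (p : ℕ) (hp : p.Prime) (G : Type*) [Group G] [Finite G]
    (V : Type*) [AddCommGroup V] [Module (ZMod p) V]
    (ρ : Representation (ZMod p) G V) (T : Sylow p G) :
    (Submodule.span (ZMod p) {w : V | ∃ g ∈ pResidual p G, ∃ v : V, w = ρ g v - v} ⊔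
        repFixedPoints p ρ (T : Subgroup G) =
      Submodule.span (ZMod p) {w : V | ∃ g ∈ pResidual p G, ∃ v : V, w = ρ g v - v} ⊔
        repFixedPoints p ρ ⊤) ∧
    (repFixedPoints p ρ ⊤ = ⊥ →
      repFixedPoints p ρ (T : Subgroup G) ≤
        Submodule.span (ZMod p) {w : V | ∃ g ∈ pResidual p G, ∃ v : V, w = ρ g v - v}) := by
  haveI := Fact.mk hp
  set W := Submodule.span (ZMod p) {w : V | ∃ g ∈ pResidual p G, ∃ v : V, w = ρ g v - v}
    with hW
  -- key: C_V(T) ≤ W ⊔ C_V(⊤)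
  have key : repFixedPoints p ρ (T : Subgroup G) ≤ W ⊔ repFixedPoints p ρ ⊤ := by
    intro v hv
    rw [mem_repFixedPoints] at hv
    -- every difference lies in W
    have hdiff : ∀ g : G, ρ g v - v ∈ W := by
      intro g
      have hg : g ∈ pResidual p G ⊔ (T : Subgroup G) := by
        rw [pResidual_sup_sylow p hp G T]; trivial
      haveI := pResidual_normal p G
      rw [← SetLike.mem_coe, Subgroup.normal_mul] at hg
      obtain ⟨n, hn, t, ht, rfl⟩ := hg
      have : ρ (n * t) v = ρ n v := by
        rw [map_mul]
        simp [Module.End.mul_apply, hv t ht]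
      rw [this]
      exact Submodule.subset_span ⟨n, hn, v, rfl⟩
    haveI : Fintype (G ⧸ (T : Subgroup G)) := Fintype.ofFinite _
    -- the averaging function
    set f : G ⧸ (T : Subgroup G) → V :=
      Quotient.lift (fun g => ρ g v) (by
        intro a b hab
        have hab' : a⁻¹ * b ∈ (T : Subgroup G) := QuotientGroup.leftRel_apply.mp hab
        have : ρ b v = ρ a (ρ (a⁻¹ * b) v) := by
          rw [← Module.End.mul_apply, ← map_mul, mul_inv_cancel_left]
        simp only [this, hv _ hab']) with hf
    have hfmk : ∀ g : G, f (QuotientGroup.mk g) = ρ g v := fun g => rfl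
    set S : V := ∑ x : G ⧸ (T : Subgroup G), f x with hS
    have hSfix : S ∈ repFixedPoints p ρ ⊤ := by
      rw [mem_repFixedPoints]
      intro h _
      have : ρ h S = ∑ x : G ⧸ (T : Subgroup G), f (h • x) := by
        rw [hS, map_sum]
        refine Finset.sum_congr rfl fun x _ => ?_
        induction x using Quotient.inductionOn with
        | h g =>
          show ρ h (f (QuotientGroup.mk g)) = f (h • QuotientGroup.mk g)
          rw [hfmk]
          have : h • (QuotientGroup.mk g : G ⧸ (T : Subgroup G)) = QuotientGroup.mk (h * g) :=
            rfl
          rw [this, hfmk, map_mul, Module.End.mul_apply]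
      rw [this]
      exact Fintype.sum_equiv (MulAction.toPerm h) _ _ (fun x => rfl)
    set d : V := ∑ x : G ⧸ (T : Subgroup G), (f x - v) with hd
    have hdW : d ∈ W := by
      refine Submodule.sum_mem _ fun x _ => ?_
      induction x using Quotient.inductionOn with
      | h g => exact hfmk g ▸ hdiff g
    have hcard : S = d + (Fintype.card (G ⧸ (T : Subgroup G))) • v := by
      rw [hS, hd, Finset.sum_sub_distrib, Finset.sum_const, Finset.card_univ,
        sub_add_cancel]
    -- the index is invertible mod p
    have hne : ((Fintype.card (G ⧸ (T : Subgroup G)) : ZMod p)) ≠ 0 := by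
      rw [Ne, ZMod.natCast_eq_zero_iff]
      have : (T : Subgroup G).index = Fintype.card (G ⧸ (T : Subgroup G)) := by
        rw [Subgroup.index_eq_card, Nat.card_eq_fintype_card]
      rw [← this]
      exact T.not_dvd_index
    set c : ZMod p := (Fintype.card (G ⧸ (T : Subgroup G)) : ZMod p) with hc
    have hv' : v = c⁻¹ • (S - d) := by
      rw [hcard]
      rw [add_sub_cancel_left]
      rw [← Nat.cast_smul_eq_nsmul (ZMod p), ← hc, smul_smul, inv_mul_cancel₀ hne, one_smul]
    rw [hv']
    exact Submodule.smul_mem _ _ (Submodule.sub_mem _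
      (Submodule.mem_sup_right hSfix) (Submodule.mem_sup_left hdW))
  constructor
  · refine le_antisymm (sup_le le_sup_left key) (sup_le le_sup_left ?_)
    refine le_trans ?_ le_sup_right
    intro v hv
    rw [mem_repFixedPoints] at hv ⊢
    exact fun g _ => hv g trivial
  · intro h
    have := key
    rw [h, sup_bot_eq] at this
    exact this
end
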